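/- Let R and B be simple graphs on a common vertex set of size n such that the pair (R, B) contains neither T1 nor T2. Then e(R) + e(B) ≤ n²/2. -/

import Mathlib

open SimpleGraph Set

/-- The pair `(R, B)` contains `T1`: a triangle `x, y, z` in which the edge `{x,y}` is both
red and blue and the edges `{x,z}`, `{y,z}` are red. (Distinctness of `x, y, z` follows from
adjacency in a simple graph.) -/
def ContainsT1 {V : Type*} (R B : SimpleGraph V) : Prop :=
  ∃ x y z : V, R.Adj x y ∧ B.Adj x y ∧ R.Adj x z ∧ R.Adj y z

/-- The pair `(R, B)` contains `T2`: a triangle `x, y, z` in which the edge `{x,y}` is both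
red and blue, the edge `{x,z}` is red and the edge `{y,z}` is blue. -/
def ContainsT2 {V : Type*} (R B : SimpleGraph V) : Prop :=
  ∃ x y z : V, R.Adj x y ∧ B.Adj x y ∧ R.Adj x z ∧ B.Adj y z

open Finset

/-- ordered adjacent pairs inside `s` -/
def Dpairs {V : Type} [DecidableEq V] (G : SimpleGraph V) [DecidableRel G.Adj]
    (s : Finset V) : Finset (V × V) :=
  (s ×ˢ s).filter fun p => G.Adj p.1 p.2

lemma Dpairs_erase {V : Type} [DecidableEq V] (G : SimpleGraph V) [DecidableRel G.Adj]
    {s : Finset V} {x : V} (hx : x ∈ s) :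
    (Dpairs G s).card = (Dpairs G (s.erase x)).card + 2 * (s.filter (G.Adj x ·)).card := by
  have h1 : Dpairs G (s.erase x) = (Dpairs G s).filter (fun p => p.1 ≠ x ∧ p.2 ≠ x) := by
    ext ⟨a, b⟩
    simp only [Dpairs, mem_filter, mem_product, mem_erase]
    tauto
  have h2 : (Dpairs G s).filter (fun p => ¬(p.1 ≠ x ∧ p.2 ≠ x)) =
      ((s.filter (G.Adj x ·)).image fun z => (x, z)) ∪
      ((s.filter (G.Adj x ·)).image fun z => (z, x)) := by
    ext ⟨a, b⟩
    simp only [Dpairs, Finset.mem_filter, Finset.mem_product, Finset.mem_union,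
      Finset.mem_image, Prod.mk.injEq, not_and, not_not]
    constructor
    · rintro ⟨⟨⟨ha, hb⟩, hab⟩, hor⟩
      by_cases hax : a = x
      · exact Or.inl ⟨b, ⟨hb, hax ▸ hab⟩, hax.symm, rfl⟩
      · have hbx : b = x := hor hax
        exact Or.inr ⟨a, ⟨ha, (hbx ▸ hab).symm⟩, rfl, hbx.symm⟩
    · rintro (⟨z, ⟨hz, hadj⟩, hxa, hzb⟩ | ⟨z, ⟨hz, hadj⟩, hza, hxb⟩)
      · subst hxa; subst hzb; exact ⟨⟨⟨hx, hz⟩, hadj⟩, fun h => absurd rfl h⟩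
      · subst hza; subst hxb; exact ⟨⟨⟨hz, hx⟩, hadj.symm⟩, fun _ => rfl⟩
  have hdisj : Disjoint ((s.filter (G.Adj x ·)).image fun z => (x, z))
      ((s.filter (G.Adj x ·)).image fun z => (z, x)) := by
    rw [Finset.disjoint_left]
    rintro ⟨a, b⟩ h1' h2'
    simp only [Finset.mem_image, Prod.mk.injEq, Finset.mem_filter] at h1' h2'
    obtain ⟨z, ⟨_, hz⟩, rfl, rfl⟩ := h1'
    obtain ⟨w, ⟨_, hw⟩, hwa, hbx⟩ := h2'
    exact G.loopless.irrefl x (hbx ▸ hz)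
  have hinj1 : ((s.filter (G.Adj x ·)).image fun z => (x, z)).card
      = (s.filter (G.Adj x ·)).card :=
    Finset.card_image_of_injective _ (fun a b h => by simpa using h)
  have hinj2 : ((s.filter (G.Adj x ·)).image fun z => (z, x)).card
      = (s.filter (G.Adj x ·)).card :=
    Finset.card_image_of_injective _ (fun a b h => by simpa using h)
  have := Finset.card_filter_add_card_filter_not
    (s := Dpairs G s) (fun p => p.1 ≠ x ∧ p.2 ≠ x)
  rw [← h1] at this
  rw [h2, Finset.card_union_of_disjoint hdisj, hinj1, hinj2] at this
  omega

lemma point_bound {V : Type} (R B : SimpleGraph V) [DecidableRel R.Adj] [DecidableRel B.Adj]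
    (h1 : ¬ ContainsT1 R B) (h2 : ¬ ContainsT2 R B) {x y : V}
    (hR : R.Adj x y) (hB : B.Adj x y) (z : V) :
    (if R.Adj x z then 1 else 0) + (if B.Adj x z then 1 else 0) +
    ((if R.Adj y z then 1 else 0) + (if B.Adj y z then 1 else 0)) ≤ 2 := by
  have n1 : ¬(R.Adj x z ∧ R.Adj y z) := fun ⟨a, b⟩ => h1 ⟨x, y, z, hR, hB, a, b⟩
  have n2 : ¬(R.Adj x z ∧ B.Adj y z) := fun ⟨a, b⟩ => h2 ⟨x, y, z, hR, hB, a, b⟩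
  have n3 : ¬(R.Adj y z ∧ B.Adj x z) := fun ⟨a, b⟩ => h2 ⟨y, x, z, hR.symm, hB.symm, a, b⟩
  split_ifs <;> first | omega | tauto

lemma deg_sum_bound {V : Type} [DecidableEq V] (R B : SimpleGraph V)
    [DecidableRel R.Adj] [DecidableRel B.Adj]
    (h1 : ¬ ContainsT1 R B) (h2 : ¬ ContainsT2 R B) {x y : V}
    (hR : R.Adj x y) (hB : B.Adj x y) (s : Finset V) :
    (s.filter (R.Adj x ·)).card + (s.filter (B.Adj x ·)).card +
    ((s.filter (R.Adj y ·)).card + (s.filter (B.Adj y ·)).card) ≤ 2 * s.card := by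
  simp only [Finset.card_filter]
  rw [← Finset.sum_add_distrib, ← Finset.sum_add_distrib, ← Finset.sum_add_distrib]
  calc (∑ z ∈ s, ((if R.Adj x z then 1 else 0) + (if B.Adj x z then 1 else 0) +
        ((if R.Adj y z then 1 else 0) + (if B.Adj y z then 1 else 0))))
      ≤ ∑ z ∈ s, 2 := Finset.sum_le_sum fun z _ => point_bound R B h1 h2 hR hB z
    _ = 2 * s.card := by rw [Finset.sum_const, smul_eq_mul, mul_comm]

lemma main_aux {V : Type} [DecidableEq V] (R B : SimpleGraph V)
    [DecidableRel R.Adj] [DecidableRel B.Adj]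
    (h1 : ¬ ContainsT1 R B) (h2 : ¬ ContainsT2 R B) (s : Finset V) :
    (Dpairs R s).card + (Dpairs B s).card ≤ s.card ^ 2 := by
  induction s using Finset.strongInduction with
  | _ s ih =>
    by_cases hp : ∃ x ∈ s, ∃ y ∈ s, R.Adj x y ∧ B.Adj x y
    · obtain ⟨x, hx, y, hy, hRxy, hBxy⟩ := hp
      have hxy : x ≠ y := hRxy.ne
      have hyt : y ∈ s.erase x := mem_erase.2 ⟨hxy.symm, hy⟩
      set t := s.erase x with ht
      set u := t.erase y with hu
      have hus : u ⊂ s :=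
        Finset.ssubset_of_subset_of_ssubset (Finset.erase_subset y t) (Finset.erase_ssubset hx)
      have IH := ih u hus
      -- card bookkeeping
      have hcu : u.card + 1 = t.card := Finset.card_erase_add_one hyt
      have hct : t.card + 1 = s.card := Finset.card_erase_add_one hx
      obtain ⟨m, hm⟩ : ∃ m, s.card = m + 2 := ⟨u.card, by omega⟩
      have hum : u.card = m := by omega
      -- expand Dpairs
      have eR1 := Dpairs_erase R hx
      have eR2 := Dpairs_erase R (s := s.erase x) hyt
      have eB1 := Dpairs_erase B hx
      have eB2 := Dpairs_erase B (s := s.erase x) hyt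
      rw [← ht] at eR1 eR2 eB1 eB2
      rw [← hu] at eR2 eB2
      -- filter over t vs s for vertex y
      have hfR : (t.filter (R.Adj y ·)).card + 1 = (s.filter (R.Adj y ·)).card := by
        rw [ht, Finset.filter_erase]
        exact Finset.card_erase_add_one (Finset.mem_filter.2 ⟨hx, hRxy.symm⟩)
      have hfB : (t.filter (B.Adj y ·)).card + 1 = (s.filter (B.Adj y ·)).card := by
        rw [ht, Finset.filter_erase]
        exact Finset.card_erase_add_one (Finset.mem_filter.2 ⟨hx, hBxy.symm⟩)
      have hdeg := deg_sum_bound R B h1 h2 hRxy hBxy s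
      rw [hum] at IH
      rw [hm]
      have hexp : (m + 2) ^ 2 = m ^ 2 + 4 * m + 4 := by ring
      rw [hexp]
      rw [hm] at hdeg
      linarith
    · push_neg at hp
      have hdisj : Disjoint (Dpairs R s) (Dpairs B s) := by
        rw [Finset.disjoint_left]
        rintro ⟨a, b⟩ hp1 hp2
        simp only [Dpairs, mem_filter, mem_product] at hp1 hp2
        exact hp a hp1.1.1 b hp1.1.2 hp1.2 hp2.2
      calc (Dpairs R s).card + (Dpairs B s).card = (Dpairs R s ∪ Dpairs B s).card :=
            (Finset.card_union_of_disjoint hdisj).symm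
        _ ≤ (s ×ˢ s).card := Finset.card_le_card
            (Finset.union_subset (Finset.filter_subset _ _) (Finset.filter_subset _ _))
        _ = s.card ^ 2 := by rw [Finset.card_product, sq]

/-- Claim 5.1: if the bicolored graph `(R, B)` on `n` vertices contains neither `T1` nor
`T2`, then `e(R) + e(B) ≤ n²/2` (edges in both colors counted twice). -/
theorem T1_T2_free_edge_bound {V : Type} [Fintype V] {n : ℕ} (hV : Fintype.card V = n)
    (R B : SimpleGraph V) (h1 : ¬ ContainsT1 R B) (h2 : ¬ ContainsT2 R B) :
    ((R.edgeSet.ncard : ℝ) + (B.edgeSet.ncard : ℝ)) ≤ (n : ℝ)^2/2 := by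
  classical
  have key := main_aux R B h1 h2 (Finset.univ : Finset V)
  have hDR : (Dpairs R Finset.univ).card = 2 * R.edgeFinset.card := by
    rw [SimpleGraph.two_mul_card_edgeFinset]
    congr 1
  have hDB : (Dpairs B Finset.univ).card = 2 * B.edgeFinset.card := by
    rw [SimpleGraph.two_mul_card_edgeFinset]
    congr 1
  have hnR : R.edgeSet.ncard = R.edgeFinset.card := by
    rw [Set.ncard_eq_toFinset_card']
    congr 1
  have hnB : B.edgeSet.ncard = B.edgeFinset.card := by
    rw [Set.ncard_eq_toFinset_card']
    congr 1
  rw [Finset.card_univ, hV, hDR, hDB] at key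
  have : (2 : ℝ) * (R.edgeSet.ncard + B.edgeSet.ncard) ≤ (n : ℝ) ^ 2 := by
    rw [hnR, hnB]
    exact_mod_cast (by omega : 2 * (R.edgeFinset.card + B.edgeFinset.card) ≤ n ^ 2)
  linarith
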